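/- (Final stage condition is forward-invariant.) Consider the system da/dt = Bc, dB/dt = a c^T, dc/dt = B^T a on a maximal existence interval [0, T*). Suppose at some time t₀ < T* the following hold: (1) for every i, c_i ⟨a, b^i⟩ > 0 and a_i ⟨b_i, c⟩ > 0; (2) for every i, j, ⟨c_i b^i, c_j b^j⟩ > 0 and ⟨a_i b_i, a_j b_j⟩ > 0, where b^i is the i-th column and b_i the i-th row of B. Then these inequalities hold for all t ∈ (t₀, T*). -/

import Mathlib

/-- The "good positivity" condition at time `s`. -/
def GPcond (m : ℕ) (a c : ℝ → Fin m → ℝ) (B : ℝ → Fin m → Fin m → ℝ) (s : ℝ) : Prop :=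
  (∀ i, 0 < c s i * ∑ k, a s k * B s k i) ∧
  (∀ i, 0 < a s i * ∑ k, B s i k * c s k) ∧
  (∀ i j, 0 < ∑ k, (c s i * B s k i) * (c s j * B s k j)) ∧
  (∀ i j, 0 < ∑ k, (a s i * B s i k) * (a s j * B s j k))

/-- If a function has positive derivative on `[t₀, τ)` and is positive at `t₀`,
it is positive at `τ`. -/
lemma pos_later {f : ℝ → ℝ} {t₀ τ : ℝ} (h : t₀ < τ)
    (hd : ∀ s ∈ Set.Icc t₀ τ, ∃ d, HasDerivAt f d s ∧ (s ∈ Set.Ico t₀ τ → 0 < d))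
    (h0 : 0 < f t₀) : 0 < f τ := by
  have hcont : ContinuousOn f (Set.Icc t₀ τ) := fun s hs =>
    ((hd s hs).choose_spec.1.continuousAt).continuousWithinAt
  have hmono : StrictMonoOn f (Set.Icc t₀ τ) := by
    refine strictMonoOn_of_deriv_pos (convex_Icc t₀ τ) hcont ?_
    intro x hx
    rw [interior_Icc] at hx
    obtain ⟨d, hdd, hpos⟩ := hd x ⟨hx.1.le, hx.2.le⟩
    rw [hdd.deriv]
    exact hpos ⟨hx.1.le, hx.2⟩
  exact h0.trans (hmono (Set.left_mem_Icc.mpr h.le) (Set.right_mem_Icc.mpr h.le) h)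

lemma deriv1 {m : ℕ} {Tstar : ℝ} {a c : ℝ → Fin m → ℝ} {B : ℝ → Fin m → Fin m → ℝ}
    (ha : ∀ t ∈ Set.Ico (0:ℝ) Tstar, ∀ i,
      HasDerivAt (fun s => a s i) (∑ j, B t i j * c t j) t)
    (hB : ∀ t ∈ Set.Ico (0:ℝ) Tstar, ∀ i j,
      HasDerivAt (fun s => B s i j) (a t i * c t j) t)
    (hc : ∀ t ∈ Set.Ico (0:ℝ) Tstar, ∀ j,
      HasDerivAt (fun s => c s j) (∑ i, B t i j * a t i) t)
    {t : ℝ} (ht : t ∈ Set.Ico (0:ℝ) Tstar) (i : Fin m) :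
    ∃ d, HasDerivAt (fun s => c s i * ∑ k, a s k * B s k i) d t ∧
      ((∀ i' j', 0 < ∑ k, (c t i' * B t k i') * (c t j' * B t k j')) → 0 < d) := by
  have hA : HasDerivAt (fun s => ∑ k, a s k * B s k i)
      (∑ k, ((∑ j, B t k j * c t j) * B t k i + a t k * (a t k * c t i))) t :=
    HasDerivAt.fun_sum (fun k _ => (ha t ht k).mul (hB t ht k i))
  refine ⟨_, (hc t ht i).mul hA, fun h2 => ?_⟩
  have e1 : (∑ l, B t l i * a t l) = ∑ l, a t l * B t l i :=
    Finset.sum_congr rfl fun l _ => mul_comm _ _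
  have e2 : c t i * (∑ k, ((∑ j, B t k j * c t j) * B t k i + a t k * (a t k * c t i)))
      = (∑ j, ∑ k, (c t i * B t k i) * (c t j * B t k j)) + ∑ k, (a t k * c t i)^2 := by
    rw [Finset.mul_sum]
    have hptw : ∀ k : Fin m,
        c t i * ((∑ j, B t k j * c t j) * B t k i + a t k * (a t k * c t i))
        = (∑ j, (c t i * B t k i) * (c t j * B t k j)) + (a t k * c t i)^2 := by
      intro k
      rw [mul_add]
      congr 1
      · rw [Finset.sum_mul, Finset.mul_sum]
        exact Finset.sum_congr rfl fun j _ => by ring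
      · ring
    rw [Finset.sum_congr rfl fun k _ => hptw k, Finset.sum_add_distrib, Finset.sum_comm]
  rw [e1, e2]
  have hpos : 0 < ∑ j, ∑ k, (c t i * B t k i) * (c t j * B t k j) :=
    Finset.sum_pos (fun j _ => h2 i j) ⟨i, Finset.mem_univ i⟩
  have hsq1 : 0 ≤ (∑ l, a t l * B t l i) * (∑ k, a t k * B t k i) := mul_self_nonneg _
  have hsq2 : 0 ≤ ∑ k, (a t k * c t i)^2 := Finset.sum_nonneg fun k _ => sq_nonneg _
  linarith

lemma deriv2 {m : ℕ} {Tstar : ℝ} {a c : ℝ → Fin m → ℝ} {B : ℝ → Fin m → Fin m → ℝ}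
    (ha : ∀ t ∈ Set.Ico (0:ℝ) Tstar, ∀ i,
      HasDerivAt (fun s => a s i) (∑ j, B t i j * c t j) t)
    (hB : ∀ t ∈ Set.Ico (0:ℝ) Tstar, ∀ i j,
      HasDerivAt (fun s => B s i j) (a t i * c t j) t)
    (hc : ∀ t ∈ Set.Ico (0:ℝ) Tstar, ∀ j,
      HasDerivAt (fun s => c s j) (∑ i, B t i j * a t i) t)
    {t : ℝ} (ht : t ∈ Set.Ico (0:ℝ) Tstar) (i j : Fin m) :
    ∃ d, HasDerivAt (fun s => ∑ k, (c s i * B s k i) * (c s j * B s k j)) d t ∧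
      ((∀ i', 0 < c t i' * ∑ k, a t k * B t k i') →
       (∀ i' j', 0 < ∑ k, (c t i' * B t k i') * (c t j' * B t k j')) → 0 < d) := by
  have hterm : ∀ k : Fin m, HasDerivAt (fun s => (c s i * B s k i) * (c s j * B s k j))
      (((∑ l, B t l i * a t l) * B t k i + c t i * (a t k * c t i)) * (c t j * B t k j)
        + (c t i * B t k i) * ((∑ l, B t l j * a t l) * B t k j + c t j * (a t k * c t j))) t :=
    fun k => ((hc t ht i).mul (hB t ht k i)).mul ((hc t ht j).mul (hB t ht k j))
  refine ⟨_, HasDerivAt.fun_sum (fun k _ => hterm k), fun hp1 hp2 => ?_⟩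
  have e1 : (∑ l, B t l i * a t l) = ∑ l, a t l * B t l i :=
    Finset.sum_congr rfl fun l _ => mul_comm _ _
  have e2 : (∑ l, B t l j * a t l) = ∑ l, a t l * B t l j :=
    Finset.sum_congr rfl fun l _ => mul_comm _ _
  have hval : (∑ k, (((∑ l, B t l i * a t l) * B t k i + c t i * (a t k * c t i)) * (c t j * B t k j)
        + (c t i * B t k i) * ((∑ l, B t l j * a t l) * B t k j + c t j * (a t k * c t j))))
      = (∑ l, a t l * B t l i) * (c t j * ∑ k, B t k i * B t k j)
        + c t i * ((∑ l, a t l * B t l j) * ∑ k, B t k i * B t k j)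
        + (c t i * c t i) * (c t j * ∑ l, a t l * B t l j)
        + (c t j * c t j) * (c t i * ∑ l, a t l * B t l i) := by
    rw [e1, e2]
    rw [show (∑ l, a t l * B t l i) * (c t j * ∑ k, B t k i * B t k j)
        = ∑ k, (∑ l, a t l * B t l i) * (c t j * (B t k i * B t k j)) by
      rw [Finset.mul_sum, Finset.mul_sum]]
    rw [show c t i * ((∑ l, a t l * B t l j) * ∑ k, B t k i * B t k j)
        = ∑ k, c t i * ((∑ l, a t l * B t l j) * (B t k i * B t k j)) by
      rw [Finset.mul_sum, Finset.mul_sum]]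
    rw [show (c t i * c t i) * (c t j * ∑ l, a t l * B t l j)
        = ∑ k, (c t i * c t i) * (c t j * (a t k * B t k j)) by
      rw [Finset.mul_sum, Finset.mul_sum]]
    rw [show (c t j * c t j) * (c t i * ∑ l, a t l * B t l i)
        = ∑ k, (c t j * c t j) * (c t i * (a t k * B t k i)) by
      rw [Finset.mul_sum, Finset.mul_sum]]
    rw [← Finset.sum_add_distrib, ← Finset.sum_add_distrib, ← Finset.sum_add_distrib]
    exact Finset.sum_congr rfl fun k _ => by ring
  rw [hval]
  have hXi : 0 < c t i * ∑ l, a t l * B t l i := hp1 i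
  have hXj : 0 < c t j * ∑ l, a t l * B t l j := hp1 j
  have eS : (∑ k, (c t i * B t k i) * (c t j * B t k j))
      = c t i * (c t j * ∑ k, B t k i * B t k j) := by
    rw [Finset.mul_sum, Finset.mul_sum]
    exact Finset.sum_congr rfl fun k _ => by ring
  have hSpos : 0 < c t i * (c t j * ∑ k, B t k i * B t k j) := eS ▸ hp2 i j
  have hci : c t i ≠ 0 := by
    intro h; rw [h, zero_mul] at hXi; exact lt_irrefl 0 hXi
  have hcj : c t j ≠ 0 := by
    intro h; rw [h, zero_mul] at hXj; exact lt_irrefl 0 hXj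
  have hci2 : 0 < c t i * c t i := mul_self_pos.2 hci
  have hcj2 : 0 < c t j * c t j := mul_self_pos.2 hcj
  have t1 : 0 < (∑ l, a t l * B t l i) * (c t j * ∑ k, B t k i * B t k j) := by
    nlinarith [mul_pos hXi hSpos, hci2]
  have t2 : 0 < c t i * ((∑ l, a t l * B t l j) * ∑ k, B t k i * B t k j) := by
    nlinarith [mul_pos hXj hSpos, hcj2]
  have t3 : 0 < (c t i * c t i) * (c t j * ∑ l, a t l * B t l j) := mul_pos hci2 hXj
  have t4 : 0 < (c t j * c t j) * (c t i * ∑ l, a t l * B t l i) := mul_pos hcj2 hXi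
  linarith

/-- Forward invariance of the final stage condition: if the condition holds at
some time `t₀ < T*`, it holds on all of `(t₀, T*)`. Here `b^i` is the `i`-th
column and `b_i` the `i`-th row of `B`. -/
theorem stmt_10 (m : ℕ) (Tstar : ℝ) (a c : ℝ → Fin m → ℝ)
    (B : ℝ → Fin m → Fin m → ℝ)
    (ha : ∀ t ∈ Set.Ico (0:ℝ) Tstar, ∀ i,
      HasDerivAt (fun s => a s i) (∑ j, B t i j * c t j) t)
    (hB : ∀ t ∈ Set.Ico (0:ℝ) Tstar, ∀ i j,
      HasDerivAt (fun s => B s i j) (a t i * c t j) t)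
    (hc : ∀ t ∈ Set.Ico (0:ℝ) Tstar, ∀ j,
      HasDerivAt (fun s => c s j) (∑ i, B t i j * a t i) t)
    (t₀ : ℝ) (ht₀ : t₀ ∈ Set.Ico (0:ℝ) Tstar)
    (h1 : ∀ i, 0 < c t₀ i * ∑ k, a t₀ k * B t₀ k i)
    (h1' : ∀ i, 0 < a t₀ i * ∑ k, B t₀ i k * c t₀ k)
    (h2 : ∀ i j, 0 < ∑ k, (c t₀ i * B t₀ k i) * (c t₀ j * B t₀ k j))
    (h2' : ∀ i j, 0 < ∑ k, (a t₀ i * B t₀ i k) * (a t₀ j * B t₀ j k)) :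
    ∀ t ∈ Set.Ioo t₀ Tstar,
      (∀ i, 0 < c t i * ∑ k, a t k * B t k i) ∧
      (∀ i, 0 < a t i * ∑ k, B t i k * c t k) ∧
      (∀ i j, 0 < ∑ k, (c t i * B t k i) * (c t j * B t k j)) ∧
      (∀ i j, 0 < ∑ k, (a t i * B t i k) * (a t j * B t j k)) := by
  -- the swapped (transposed) system
  have hBswap : ∀ t ∈ Set.Ico (0:ℝ) Tstar, ∀ i j,
      HasDerivAt (fun s => B s j i) (c t i * a t j) t := by
    intro t ht i j
    rw [mul_comm]
    exact hB t ht j i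
  -- the swapped version of the second part of the condition
  have hswapsum : ∀ s : ℝ, ∀ i' : Fin m,
      (a s i' * ∑ k, B s i' k * c s k) = a s i' * ∑ k, c s k * B s i' k := by
    intro s i'
    congr 1
    exact Finset.sum_congr rfl fun k _ => mul_comm _ _
  -- packaged derivative-positivity facts for the four families of quantities
  have key : ∀ s ∈ Set.Ico (0:ℝ) Tstar,
      (∀ i, ∃ d, HasDerivAt (fun u => c u i * ∑ k, a u k * B u k i) d s ∧
        (GPcond m a c B s → 0 < d)) ∧
      (∀ i, ∃ d, HasDerivAt (fun u => a u i * ∑ k, B u i k * c u k) d s ∧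
        (GPcond m a c B s → 0 < d)) ∧
      (∀ i j, ∃ d, HasDerivAt (fun u => ∑ k, (c u i * B u k i) * (c u j * B u k j)) d s ∧
        (GPcond m a c B s → 0 < d)) ∧
      (∀ i j, ∃ d, HasDerivAt (fun u => ∑ k, (a u i * B u i k) * (a u j * B u j k)) d s ∧
        (GPcond m a c B s → 0 < d)) := by
    intro s hs
    refine ⟨fun i => ?_, fun i => ?_, fun i j => ?_, fun i j => ?_⟩
    · obtain ⟨d, hd, hp⟩ := deriv1 ha hB hc hs i
      exact ⟨d, hd, fun hg => hp hg.2.2.1⟩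
    · obtain ⟨d, hd, hp⟩ := deriv1 (a := c) (c := a) (B := fun u p q => B u q p)
        hc hBswap ha hs i
      refine ⟨d, ?_, fun hg => hp hg.2.2.2⟩
      have efun : (fun u => a u i * ∑ k, c u k * B u i k)
          = (fun u => a u i * ∑ k, B u i k * c u k) := by
        funext u
        congr 1
        exact Finset.sum_congr rfl fun k _ => mul_comm _ _
      rw [← efun]
      exact hd
    · obtain ⟨d, hd, hp⟩ := deriv2 ha hB hc hs i j
      exact ⟨d, hd, fun hg => hp hg.1 hg.2.2.1⟩
    · obtain ⟨d, hd, hp⟩ := deriv2 (a := c) (c := a) (B := fun u p q => B u q p)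
        hc hBswap ha hs i j
      refine ⟨d, hd, fun hg => hp (fun i' => hswapsum s i' ▸ hg.2.1 i') hg.2.2.2⟩
  -- the condition holds at t₀
  have hGP0 : GPcond m a c B t₀ := ⟨h1, h1', h2, h2'⟩
  -- the condition is open (eventually holds near any point where it holds)
  have hopen : ∀ s ∈ Set.Ico (0:ℝ) Tstar, GPcond m a c B s →
      ∀ᶠ u in nhds s, GPcond m a c B u := by
    intro s hs hg
    obtain ⟨k1, k2, k3, k4⟩ := key s hs
    refine Filter.Eventually.and ?_ (Filter.Eventually.and ?_ (Filter.Eventually.and ?_ ?_))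
    · refine Filter.eventually_all.2 fun i => ?_
      exact ((k1 i).choose_spec.1.continuousAt).eventually (eventually_gt_nhds (hg.1 i))
    · refine Filter.eventually_all.2 fun i => ?_
      exact ((k2 i).choose_spec.1.continuousAt).eventually (eventually_gt_nhds (hg.2.1 i))
    · refine Filter.eventually_all.2 fun i => Filter.eventually_all.2 fun j => ?_
      exact ((k3 i j).choose_spec.1.continuousAt).eventually
        (eventually_gt_nhds (hg.2.2.1 i j))
    · refine Filter.eventually_all.2 fun i => Filter.eventually_all.2 fun j => ?_
      exact ((k4 i j).choose_spec.1.continuousAt).eventually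
        (eventually_gt_nhds (hg.2.2.2 i j))
  intro t₁ ht₁
  by_contra hnot
  set Z : Set ℝ := {s : ℝ | s ∈ Set.Icc t₀ t₁ ∧ ¬ GPcond m a c B s} with hZ
  have ht₁Z : t₁ ∈ Z := ⟨⟨ht₁.1.le, le_refl t₁⟩, fun h => hnot h⟩
  have hZne : Z.Nonempty := ⟨t₁, ht₁Z⟩
  have hZbdd : BddBelow Z := ⟨t₀, fun z hz => hz.1.1⟩
  set τ := sInf Z with hτ
  have hτ₀ : t₀ ≤ τ := le_csInf hZne fun z hz => hz.1.1
  have hτt₁ : τ ≤ t₁ := csInf_le hZbdd ht₁Z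
  have hτmem : τ ∈ Set.Ico (0:ℝ) Tstar := ⟨le_trans ht₀.1 hτ₀, lt_of_le_of_lt hτt₁ ht₁.2⟩
  have hbefore : ∀ s, t₀ ≤ s → s < τ → GPcond m a c B s := by
    intro s hs1 hs2
    by_contra hgs
    exact absurd (csInf_le hZbdd ⟨⟨hs1, le_trans hs2.le hτt₁⟩, hgs⟩) (not_le.mpr hs2)
  have hsub : Set.Icc t₀ τ ⊆ Set.Ico (0:ℝ) Tstar := fun s hs =>
    ⟨le_trans ht₀.1 hs.1, lt_of_le_of_lt (le_trans hs.2 hτt₁) ht₁.2⟩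
  have hGPτ : GPcond m a c B τ := by
    rcases eq_or_lt_of_le hτ₀ with heq | hlt
    · exact heq ▸ hGP0
    · refine ⟨fun i => ?_, fun i => ?_, fun i j => ?_, fun i j => ?_⟩
      · refine pos_later (f := fun u => c u i * ∑ k, a u k * B u k i) hlt (fun s hs => ?_) (h1 i)
        obtain ⟨d, hd, hp⟩ := (key s (hsub hs)).1 i
        exact ⟨d, hd, fun hsIco => hp (hbefore s hsIco.1 hsIco.2)⟩
      · refine pos_later (f := fun u => a u i * ∑ k, B u i k * c u k) hlt (fun s hs => ?_) (h1' i)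
        obtain ⟨d, hd, hp⟩ := (key s (hsub hs)).2.1 i
        exact ⟨d, hd, fun hsIco => hp (hbefore s hsIco.1 hsIco.2)⟩
      · refine pos_later (f := fun u => ∑ k, (c u i * B u k i) * (c u j * B u k j)) hlt (fun s hs => ?_) (h2 i j)
        obtain ⟨d, hd, hp⟩ := (key s (hsub hs)).2.2.1 i j
        exact ⟨d, hd, fun hsIco => hp (hbefore s hsIco.1 hsIco.2)⟩
      · refine pos_later (f := fun u => ∑ k, (a u i * B u i k) * (a u j * B u j k)) hlt (fun s hs => ?_) (h2' i j)
        obtain ⟨d, hd, hp⟩ := (key s (hsub hs)).2.2.2 i j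
        exact ⟨d, hd, fun hsIco => hp (hbefore s hsIco.1 hsIco.2)⟩
  obtain ⟨ε, hε, hball⟩ := Metric.eventually_nhds_iff.mp (hopen τ hτmem hGPτ)
  have hττε : τ < τ + ε := by linarith
  obtain ⟨z, hzZ, hzlt⟩ := exists_lt_of_csInf_lt hZne hττε
  have hzτ : τ ≤ z := csInf_le hZbdd hzZ
  have : GPcond m a c B z := by
    refine hball ?_
    rw [Real.dist_eq, abs_lt]
    constructor <;> linarith
  exact hzZ.2 this
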